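/- Let κ ≥ 1 be a natural number, m = 2κ+1, α₀ ∈ (0,1), and let η₁, η₂ be reals with 0 < η₂ < η₁. Set d = m^{1−η₂}, ε = m^{−η₁}, a = ⌊(1−α₀)m − d⌋ and â = ⌊a − d⌋, and assume 1 ≤ a. Let (w_k)_{k=1}^m and (u_k)_{k=1}^m be families of nonnegative real numbers, each family having pairwise distinct values, such that: (i) |u_k − w_k| < ε/2 for every k; and (ii) for every k, if r(w_k) ≤ a − d then w_{(a)} − w_k ≥ ε. Then {k : r(w_k) ≤ â} ⊆ {k : r(u_k) ≤ (1−α₀)m}. (This is the pathwise content of Lemma 'glocal filtering' 3.3(a): on the event Ω_{n,j} and for blocks without jumps, the indices selected by the rank filter based on the Brownian-type values w are also selected by the rank filter based on the observed values u.) -/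

import Mathlib

open Finset

/-- The rank of `w k` among the family `(w k')_{k'}`:
the number of indices `k'` with `w k' ≤ w k`. -/
noncomputable def rank {m : ℕ} (w : Fin m → ℝ) (k : Fin m) : ℕ :=
  (Finset.univ.filter fun k' => w k' ≤ w k).card

/-- The `r`-th order statistic (the `r`-th smallest value) of the family `w`.
For a family with pairwise distinct values, this is the unique value of rank `r`. -/
noncomputable def orderStat {m : ℕ} (w : Fin m → ℝ) (r : ℕ) : ℝ :=
  if h : ∃ k, rank w k = r then w h.choose else 0

lemma rank_pos' {m : ℕ} (w : Fin m → ℝ) (k : Fin m) : 1 ≤ rank w k := by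
  have : k ∈ Finset.univ.filter fun k' => w k' ≤ w k := by simp
  exact Finset.card_pos.mpr ⟨k, this⟩

lemma rank_le_card' {m : ℕ} (w : Fin m → ℝ) (k : Fin m) : rank w k ≤ m := by
  simpa [rank] using Finset.card_filter_le Finset.univ (fun k' => w k' ≤ w k)

lemma rank_lt_of_lt {m : ℕ} (w : Fin m → ℝ) {k k' : Fin m} (h : w k < w k') :
    rank w k < rank w k' := by
  apply Finset.card_lt_card
  constructor
  · intro x hx
    simp only [Finset.mem_filter, Finset.mem_univ, true_and] at hx ⊢
    exact hx.trans h.le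
  · intro hsub
    have : k' ∈ Finset.univ.filter fun x => w x ≤ w k' := by simp
    have hk' := hsub this
    simp only [Finset.mem_filter, Finset.mem_univ, true_and] at hk'
    exact absurd hk' (not_le.mpr h)

lemma rank_inj {m : ℕ} {w : Fin m → ℝ} (hw : Function.Injective w) :
    Function.Injective (rank w) := by
  intro k k' h
  by_contra hne
  rcases lt_or_gt_of_ne (fun hw' => hne (hw hw')) with hlt | hgt
  · exact absurd h (rank_lt_of_lt w hlt).ne
  · exact absurd h.symm (rank_lt_of_lt w hgt).ne

lemma rank_surj {m : ℕ} {w : Fin m → ℝ} (hw : Function.Injective w)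
    {r : ℕ} (hr1 : 1 ≤ r) (hrm : r ≤ m) : ∃ k, rank w k = r := by
  have hsub : Finset.image (rank w) Finset.univ ⊆ Finset.Icc 1 m := by
    intro x hx
    simp only [Finset.mem_image] at hx
    obtain ⟨k, _, rfl⟩ := hx
    exact Finset.mem_Icc.mpr ⟨rank_pos' w k, rank_le_card' w k⟩
  have hcard : (Finset.Icc 1 m).card ≤ (Finset.image (rank w) Finset.univ).card := by
    rw [Finset.card_image_of_injective _ (rank_inj hw)]
    simp
  have heq := Finset.eq_of_subset_of_card_le hsub hcard
  have : r ∈ Finset.image (rank w) Finset.univ := by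
    rw [heq]; exact Finset.mem_Icc.mpr ⟨hr1, hrm⟩
  simpa using this

/-- Pathwise content of Lemma 3.3(a) (glocal filtering): the indices selected by the
rank filter based on the Brownian-type values `w` are also selected by the rank filter
based on the observed values `u`. -/
theorem stmt_0 (κ : ℕ) (hκ : 1 ≤ κ) (m : ℕ) (hm : m = 2 * κ + 1)
    (α₀ η₁ η₂ : ℝ) (hα₀ : α₀ ∈ Set.Ioo (0 : ℝ) 1) (hη₂ : 0 < η₂) (hη₁₂ : η₂ < η₁)
    (d ε : ℝ) (hd : d = (m : ℝ) ^ (1 - η₂)) (hε : ε = (m : ℝ) ^ (-η₁))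
    (a : ℤ) (ha : a = ⌊(1 - α₀) * (m : ℝ) - d⌋)
    (ahat : ℤ) (hahat : ahat = ⌊(a : ℝ) - d⌋)
    (ha1 : 1 ≤ a)
    (w u : Fin m → ℝ) (hw0 : ∀ k, 0 ≤ w k) (hu0 : ∀ k, 0 ≤ u k)
    (hwinj : Function.Injective w) (huinj : Function.Injective u)
    (h1 : ∀ k, |u k - w k| < ε / 2)
    (h2 : ∀ k, (rank w k : ℝ) ≤ (a : ℝ) - d → orderStat w a.toNat - w k ≥ ε) :
    {k | (rank w k : ℝ) ≤ (ahat : ℝ)} ⊆ {k | (rank u k : ℝ) ≤ (1 - α₀) * (m : ℝ)} := by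
  have hmpos : (0 : ℝ) < (m : ℝ) := by
    have : 0 < m := by omega
    exact_mod_cast this
  have hdpos : 0 < d := by rw [hd]; exact Real.rpow_pos_of_pos hmpos _
  have hεpos : 0 < ε := by rw [hε]; exact Real.rpow_pos_of_pos hmpos _
  -- a ≤ (1-α₀) m - d
  have haub : (a : ℝ) ≤ (1 - α₀) * (m : ℝ) - d := by
    rw [ha]; exact Int.floor_le _
  have haltm : (a : ℝ) ≤ (m : ℝ) := by
    have h1m : (1 - α₀) * (m : ℝ) ≤ m := by
      nlinarith [hα₀.1, hα₀.2, hmpos]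
    linarith
  have hatoNat : ((a.toNat : ℤ) : ℝ) = (a : ℝ) := by
    exact_mod_cast congrArg Int.cast (Int.toNat_of_nonneg (by linarith : (0:ℤ) ≤ a))
  have hatoNat1 : 1 ≤ a.toNat := by omega
  have hatoNatm : a.toNat ≤ m := by
    have : ((a.toNat : ℤ) : ℝ) ≤ (m : ℝ) := by rw [hatoNat]; exact haltm
    exact_mod_cast this
  have hex : ∃ k, rank w k = a.toNat := rank_surj hwinj hatoNat1 hatoNatm
  set k₀ := hex.choose with hk₀
  have hrk₀ : rank w k₀ = a.toNat := hex.choose_spec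
  have hOS : orderStat w a.toNat = w k₀ := by
    rw [orderStat, dif_pos hex]
  intro k hk
  simp only [Set.mem_setOf_eq] at hk ⊢
  -- rank w k ≤ ahat ≤ a - d
  have hka : (rank w k : ℝ) ≤ (a : ℝ) - d := by
    have : (ahat : ℝ) ≤ (a : ℝ) - d := by rw [hahat]; exact Int.floor_le _
    linarith
  have hgap := h2 k hka
  rw [hOS] at hgap
  -- subset of filters
  have hsub : (Finset.univ.filter fun k' => u k' ≤ u k) ⊆
      (Finset.univ.filter fun k' => w k' ≤ w k₀) := by
    intro k' hk'
    simp only [Finset.mem_filter, Finset.mem_univ, true_and] at hk' ⊢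
    have h1k := abs_lt.mp (h1 k)
    have h1k' := abs_lt.mp (h1 k')
    linarith
  have hru : (rank u k : ℝ) ≤ (a : ℝ) := by
    have := Finset.card_le_card hsub
    have h' : rank u k ≤ a.toNat := by rw [← hrk₀]; exact this
    have : (rank u k : ℝ) ≤ ((a.toNat : ℤ) : ℝ) := by exact_mod_cast h'
    linarith [hatoNat ▸ this]
  linarith
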